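/- For any finite group G and k ≥ 2, cp_k(G) = (1/|G|) ∑_{i=1}^{l} cp_{k-1}(Z_G(g_i)) / |C(g_i)|^{k-2}, where g_1,…,g_l are conjugacy class representatives, C(g_i) is the conjugacy class of g_i, and Z_G(g_i) its centralizer. -/

import Mathlib

open Subgroup Finset

/-- The probability `cp_m(H) = |H^{(m)}|/|H|^m` that an `m`-tuple of elements of `H`
pairwise commutes. -/
noncomputable def cp (H : Type*) [Group H] (m : ℕ) : ℚ :=
  (Nat.card {v : Fin m → H // ∀ i j, Commute (v i) (v j)} : ℚ) / (Nat.card H : ℚ) ^ m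

/-- commuting tuples transported along a MulEquiv -/
def commEquiv {H K : Type*} [Group H] [Group K] (e : H ≃* K) (m : ℕ) :
    {v : Fin m → H // ∀ i j, Commute (v i) (v j)} ≃
      {v : Fin m → K // ∀ i j, Commute (v i) (v j)} where
  toFun v := ⟨fun i => e (v.1 i), fun i j => (v.2 i j).map e⟩
  invFun v := ⟨fun i => e.symm (v.1 i), fun i j => (v.2 i j).map e.symm⟩
  left_inv v := by ext i; simp
  right_inv v := by ext i; simp

lemma cp_congr {H K : Type*} [Group H] [Group K] (e : H ≃* K) (m : ℕ) : cp H m = cp K m := by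
  rw [cp, cp, Nat.card_congr (commEquiv e m), Nat.card_congr e.toEquiv]

lemma nonempty_centralizer_mulEquiv {G : Type*} [Group G] {a b : G} (h : IsConj a b) :
    Nonempty (↥(centralizer ({a} : Set G)) ≃* ↥(centralizer ({b} : Set G))) := by
  obtain ⟨c, hc⟩ := isConj_iff.mp h
  have hmap : (centralizer ({a} : Set G)).map (MulAut.conj c : G ≃* G).toMonoidHom
      = centralizer ({b} : Set G) := by
    ext y
    rw [Subgroup.mem_map_equiv]
    simp only [mem_centralizer_singleton_iff, MulAut.conj_symm_apply, ← hc]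
    constructor
    · intro hy
      have := congrArg (fun z => c * z * c⁻¹) hy
      simpa [mul_assoc] using this
    · intro hy
      have := congrArg (fun z => c⁻¹ * z * c) hy
      simpa [mul_assoc] using this
  exact ⟨((MulAut.conj c : G ≃* G).subgroupMap (centralizer {a})).trans
    (MulEquiv.subgroupCongr hmap)⟩

def commSuccEquiv (H : Type*) [Group H] (m : ℕ) :
    {v : Fin (m + 1) → H // ∀ i j, Commute (v i) (v j)} ≃
      Σ x : H, {w : Fin m → ↥(centralizer ({x} : Set H)) // ∀ i j, Commute (w i) (w j)} where
  toFun v := ⟨v.1 0, fun i => ⟨v.1 i.succ,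
      mem_centralizer_singleton_iff.mpr (v.2 i.succ 0)⟩,
    fun i j => Subtype.ext (v.2 i.succ j.succ)⟩
  invFun p := ⟨Fin.cons p.1 (fun i => (p.2.1 i : H)), by
    intro i j
    refine Fin.cases ?_ (fun i' => ?_) i <;> refine Fin.cases ?_ (fun j' => ?_) j
    · exact Commute.refl _
    · simpa [Commute, SemiconjBy] using (mem_centralizer_singleton_iff.mp (p.2.1 j').2).symm
    · simpa [Commute, SemiconjBy] using mem_centralizer_singleton_iff.mp (p.2.1 i').2
    · simpa [Commute, SemiconjBy] using congrArg Subtype.val (p.2.2 i' j')⟩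
  left_inv v := by
    ext i
    refine Fin.cases ?_ (fun i' => ?_) i <;> simp
  right_inv p := by
    refine Sigma.ext rfl (heq_of_eq ?_)
    ext i
    simp

lemma card_comm_succ (H : Type*) [Group H] [Fintype H] (m : ℕ) :
    Nat.card {v : Fin (m + 1) → H // ∀ i j, Commute (v i) (v j)} =
      ∑ x : H, Nat.card
        {w : Fin m → ↥(centralizer ({x} : Set H)) // ∀ i j, Commute (w i) (w j)} := by
  classical
  rw [Nat.card_congr (commSuccEquiv H m)]
  haveI : ∀ x : H, Fintype {w : Fin m → ↥(centralizer ({x} : Set H)) //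
      ∀ i j, Commute (w i) (w j)} := fun x => Fintype.ofFinite _
  simp [Nat.card_eq_fintype_card, Fintype.card_sigma]

lemma class_mul_cent {G : Type*} [Group G] [Fintype G] (a : G) :
    Nat.card {x : G // IsConj a x} * Nat.card ↥(centralizer ({a} : Set G)) = Nat.card G := by
  classical
  have h1 : Nat.card {x : G // IsConj a x} = Nat.card (MulAction.orbit (ConjAct G) a) :=
    Nat.card_congr (Equiv.subtypeEquivRight fun x =>
      isConj_comm.trans ConjAct.mem_orbit_conjAct.symm)
  rw [h1, Subgroup.nat_card_centralizer_nat_card_stabilizer]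
  haveI : Fintype (ConjAct G) := ‹Fintype G›
  haveI : Fintype (MulAction.orbit (ConjAct G) a) := Fintype.ofFinite _
  haveI : Fintype (MulAction.stabilizer (ConjAct G) a) := Fintype.ofFinite _
  simp only [Nat.card_eq_fintype_card]
  rw [MulAction.card_orbit_mul_card_stabilizer_eq_card_group (ConjAct G) a]
  exact Fintype.card_congr ConjAct.toConjAct.toEquiv

lemma arith_aux (C Z N : ℚ) (m : ℕ) (hC : C ≠ 0) (hZ : Z ≠ 0) :
    C * N / (C * Z) ^ (m + 2) = 1 / (C * Z) * (N / Z ^ (m + 1) / C ^ m) := by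
  field_simp
  ring

/-- Lescot's recursion: for `k ≥ 2`,
`cp_k(G) = (1/|G|) ∑_{i=1}^{l} cp_{k-1}(Z_G(g_i)) / |C(g_i)|^{k-2}`. -/
theorem stmt_8 (G : Type*) [Group G] [Finite G] (k : ℕ) (hk : 2 ≤ k)
    (l : ℕ) (g : Fin l → G) (hrep : ∀ x : G, ∃! i, IsConj (g i) x) :
    cp G k = (1 / (Nat.card G : ℚ)) *
      ∑ i, cp (↥(Subgroup.centralizer {g i})) (k - 1) /
        (Nat.card {x : G // IsConj (g i) x} : ℚ) ^ (k - 2) := by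
  classical
  obtain ⟨m, rfl⟩ : ∃ m, k = m + 2 := ⟨k - 2, by omega⟩
  haveI := Fintype.ofFinite G
  have key : Nat.card {v : Fin (m + 2) → G // ∀ i j, Commute (v i) (v j)}
      = ∑ i : Fin l, (Finset.univ.filter fun x : G => (hrep x).choose = i).card *
          Nat.card {w : Fin (m + 1) → ↥(centralizer ({g i} : Set G)) //
            ∀ a b, Commute (w a) (w b)} := by
    rw [card_comm_succ G (m + 1),
      ← Finset.sum_fiberwise Finset.univ (fun x : G => (hrep x).choose)
        (fun x : G => Nat.card {w : Fin (m + 1) → ↥(centralizer ({x} : Set G)) //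
          ∀ a b, Commute (w a) (w b)})]
    refine Finset.sum_congr rfl fun i _ => ?_
    have hconst : ∀ x ∈ Finset.univ.filter (fun x : G => (hrep x).choose = i),
        Nat.card {w : Fin (m + 1) → ↥(centralizer ({x} : Set G)) // ∀ a b, Commute (w a) (w b)}
          = Nat.card {w : Fin (m + 1) → ↥(centralizer ({g i} : Set G)) //
              ∀ a b, Commute (w a) (w b)} := by
      intro x hx
      have hconj : IsConj (g i) x := by
        rw [← (Finset.mem_filter.mp hx).2]; exact (hrep x).choose_spec.1
      obtain ⟨e⟩ := nonempty_centralizer_mulEquiv hconj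
      exact (Nat.card_congr (commEquiv e (m + 1))).symm
    rw [Finset.sum_congr rfl hconst, Finset.sum_const, smul_eq_mul]
  have hfc : ∀ i : Fin l, (Finset.univ.filter fun x : G => (hrep x).choose = i).card
      = Nat.card {x : G // IsConj (g i) x} := by
    intro i
    rw [Nat.card_eq_fintype_card, Fintype.card_subtype]
    congr 1
    apply Finset.filter_congr
    intro x _
    constructor
    · intro h; rw [← h]; exact (hrep x).choose_spec.1
    · intro h; exact ((hrep x).choose_spec.2 i h).symm
  rw [show cp G (m + 2) = (Nat.card {v : Fin (m + 2) → G // ∀ i j, Commute (v i) (v j)} : ℚ)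
      / (Nat.card G : ℚ) ^ (m + 2) from rfl, key]
  push_cast
  rw [Finset.sum_div, Finset.mul_sum]
  refine Finset.sum_congr rfl fun i _ => ?_
  rw [hfc i]
  have e1 : cp (↥(Subgroup.centralizer {g i})) (m + 1)
      = (Nat.card {w : Fin (m + 1) → ↥(centralizer ({g i} : Set G)) //
          ∀ a b, Commute (w a) (w b)} : ℚ)
        / (Nat.card ↥(centralizer ({g i} : Set G)) : ℚ) ^ (m + 1) := rfl
  rw [e1]
  have hCZ : (Nat.card {x : G // IsConj (g i) x} : ℚ)
      * (Nat.card ↥(centralizer ({g i} : Set G)) : ℚ) = (Nat.card G : ℚ) := by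
    exact_mod_cast class_mul_cent (g i)
  have hC : (Nat.card {x : G // IsConj (g i) x} : ℚ) ≠ 0 :=
    Nat.cast_ne_zero.mpr (@Nat.card_pos _ ⟨⟨g i, IsConj.refl _⟩⟩ _).ne'
  have hZ : (Nat.card ↥(centralizer ({g i} : Set G)) : ℚ) ≠ 0 :=
    Nat.cast_ne_zero.mpr Nat.card_pos.ne'
  rw [← hCZ]
  exact arith_aux _ _ _ m hC hZ
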